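/- Let (Z_i)_{i=1..n} be i.i.d. from ℙ on Z, E ⊆ Z with ℙ(E) = q > 0, F ⊆ Z, γ = ℙ(F | E), and γ̂ = (#{i : Z_i ∈ E ∩ F})/(#{i : Z_i ∈ E}) with 0/0 = 0. Then for any β ∈ (0,1): ℙ(γ̂ ≥ (1+β)·γ) ≤ exp(−q·n/8) + exp(−β²·q·γ·n/6) and ℙ(γ̂ ≤ (1−β)·γ) ≤ exp(−q·n/8) + exp(−β²·q·γ·n/4). -/

import Mathlib

open MeasureTheory ProbabilityTheory
open scoped Classical

section auxiliary
open Real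


lemma aux_quad_le_exp {x : ℝ} (hx : 0 ≤ x) : 1 + x + x^2/2 ≤ Real.exp x := by
  have h := Real.sum_le_exp_of_nonneg hx 3
  simp [Finset.sum_range_succ, Nat.factorial] at h
  nlinarith [h]

lemma aux_exp_neg_le {u : ℝ} (h0 : 0 ≤ u) (h1 : u ≤ 1) : Real.exp (-u) ≤ 1 - u/2 := by
  have h := aux_quad_le_exp h0
  have hpos : (0:ℝ) < 1 + u + u^2/2 := by nlinarith
  rw [Real.exp_neg, inv_le_iff_one_le_mul₀ (Real.exp_pos u)]
  nlinarith [Real.exp_pos u]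

lemma aux_log_one_add {β : ℝ} (h0 : 0 ≤ β) (h1 : β ≤ 1) :
    2*β/(2+β) ≤ Real.log (1+β) := by
  set y : ℝ := 2*β/(2+β) with hy
  have hd : (0:ℝ) < 2 + β := by linarith
  have hy0 : 0 ≤ y := by positivity
  have hy1 : y ≤ 1 := by rw [hy, div_le_one hd]; linarith
  have hb := Real.exp_bound (x := y) (by rw [abs_of_nonneg hy0]; exact hy1) (n := 3) (by norm_num)
  rw [abs_of_nonneg hy0] at hb
  have hsum : ∑ m ∈ Finset.range 3, y ^ m / m.factorial = 1 + y + y^2/2 := by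
    norm_num [Finset.sum_range_succ, Nat.factorial]
  rw [hsum] at hb
  have hexp : Real.exp y ≤ 1 + y + y^2/2 + 2/9 * y^3 := by
    have h2 := (abs_sub_le_iff.1 hb).1
    norm_num [Nat.factorial] at h2
    nlinarith [h2]
  have key : Real.exp y ≤ 1 + β := by
    have h2 : (1 + y + y^2/2 + 2/9*y^3) * (2 - y) ≤ 2 + y := by
      nlinarith [pow_le_one₀ hy0 hy1 (n := 4), sq_nonneg y, pow_nonneg hy0 3, pow_nonneg hy0 4]
    have h3 : (2:ℝ) - y > 0 := by linarith
    have h4 : (2 + y)/(2 - y) = 1 + β := by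
      rw [hy]; field_simp; ring
    calc Real.exp y ≤ 1 + y + y^2/2 + 2/9*y^3 := hexp
      _ ≤ (2+y)/(2-y) := by rw [le_div_iff₀ h3]; linarith [h2]
      _ = 1 + β := h4
  exact (Real.le_log_iff_exp_le (by linarith)).2 key

lemma aux_upper_log {β : ℝ} (h0 : 0 < β) (h1 : β ≤ 1) :
    β + β^2/3 ≤ (1+β) * Real.log (1+β) := by
  have h := aux_log_one_add h0.le h1
  have hd : (0:ℝ) < 2 + β := by linarith
  have h2 : (1+β) * (2*β/(2+β)) ≤ (1+β) * Real.log (1+β) :=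
    mul_le_mul_of_nonneg_left h (by linarith)
  refine le_trans ?_ h2
  rw [show (1+β) * (2*β/(2+β)) = ((1+β)*(2*β))/(2+β) from by ring, le_div_iff₀ hd]
  nlinarith

lemma aux_lower_log {β : ℝ} (h0 : 0 < β) (h1 : β < 1) :
    β^2/2 - β ≤ (1-β) * Real.log (1-β) := by
  have hb : (0:ℝ) < 1 - β := by linarith
  set w : ℝ := (β - β^2/2)/(1-β) with hw
  have hw0 : 0 ≤ w := by
    apply div_nonneg _ hb.le; nlinarith
  have hwb2 : w * (1-β)^2 = (β - β^2/2) * (1-β) := by rw [hw]; field_simp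
  have hw2' : w^2 * (1-β)^2 = (β - β^2/2)^2 := by rw [hw]; field_simp
  have key : (1:ℝ) ≤ (1 + w + w^2/2) * (1-β) := by
    have hkey : (1-β) * 1 ≤ (1-β) * ((1 + w + w^2/2) * (1-β)) := by
      nlinarith [hwb2, hw2', sq_nonneg (β^2), sq_nonneg β]
    have := le_of_mul_le_mul_left (by linarith [hkey] : (1-β) * 1 ≤ (1-β) * ((1 + w + w^2/2) * (1-β))) hb
    linarith
  have h1' : 1/(1-β) ≤ 1 + w + w^2/2 := by
    rw [div_le_iff₀ hb]; linarith
  have h2 : 1/(1-β) ≤ Real.exp w := le_trans h1' (aux_quad_le_exp hw0)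
  have h3 : Real.log (1/(1-β)) ≤ w := (Real.log_le_iff_le_exp (by positivity)).2 h2
  rw [one_div, Real.log_inv] at h3
  have h4 : -w ≤ Real.log (1-β) := by linarith
  have h5 : (1-β) * (-w) ≤ (1-β) * Real.log (1-β) :=
    mul_le_mul_of_nonneg_left h4 hb.le
  have h6 : (1-β) * (-w) = β^2/2 - β := by rw [hw]; field_simp; ring
  linarith [h5, h6.symm.le]
/-- per-sample mgf bound, upper tail, with `t = log (1+β)`, `c = (1+β)γ`. -/
lemma persample_upper {β γ q : ℝ} (hβ0 : 0 < β) (hβ1 : β < 1)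
    (hγ0 : 0 < γ) (hγ1 : γ ≤ 1) (hq0 : 0 < q) (hq1 : q ≤ 1) :
    1 - q + q * (γ * Real.exp (Real.log (1+β) * (1 - (1+β)*γ))
      + (1-γ) * Real.exp (Real.log (1+β) * (-((1+β)*γ))))
      ≤ Real.exp (-(q * (β^2 * γ) / 6)) := by
  set t : ℝ := Real.log (1+β) with ht
  have hb1 : (0:ℝ) < 1 + β := by linarith
  have het : Real.exp t = 1 + β := Real.exp_log hb1
  have e1 : Real.exp (t * (1 - (1+β)*γ)) = (1+β) * Real.exp (t * (-((1+β)*γ))) := by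
    rw [show t * (1 - (1+β)*γ) = t + t * (-((1+β)*γ)) by ring, Real.exp_add, het]
  have inner_eq : γ * Real.exp (t * (1 - (1+β)*γ)) + (1-γ) * Real.exp (t * (-((1+β)*γ)))
      = (1 + β*γ) * Real.exp (-((1+β)*γ*t)) := by
    rw [e1]; ring_nf
  have step2 : (1 + β*γ) ≤ Real.exp (β*γ) := by
    have := Real.add_one_le_exp (β*γ); linarith
  have step3 : (1 + β*γ) * Real.exp (-((1+β)*γ*t)) ≤ Real.exp (β*γ - (1+β)*γ*t) := by
    have h := mul_le_mul_of_nonneg_right step2 (Real.exp_pos (-((1+β)*γ*t))).le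
    rw [← Real.exp_add] at h
    calc (1 + β*γ) * Real.exp (-((1+β)*γ*t)) ≤ Real.exp (β*γ + -((1+β)*γ*t)) := h
      _ = Real.exp (β*γ - (1+β)*γ*t) := by ring_nf
  have step4 : β*γ - (1+β)*γ*t ≤ -(β^2*γ/3) := by
    have h := aux_upper_log hβ0 hβ1.le
    have h2 : γ * (β + β^2/3) ≤ γ * ((1+β)*t) := by
      apply mul_le_mul_of_nonneg_left _ hγ0.le
      rw [ht]; exact h
    nlinarith
  have step5 : Real.exp (β*γ - (1+β)*γ*t) ≤ Real.exp (-(β^2*γ/3)) := Real.exp_le_exp.2 step4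
  have step6 : Real.exp (-(β^2*γ/3)) ≤ 1 - (β^2*γ/3)/2 := by
    apply aux_exp_neg_le
    · positivity
    · nlinarith
  have inner_le : γ * Real.exp (t * (1 - (1+β)*γ)) + (1-γ) * Real.exp (t * (-((1+β)*γ)))
      ≤ 1 - β^2*γ/6 := by
    rw [inner_eq]
    calc (1 + β*γ) * Real.exp (-((1+β)*γ*t)) ≤ Real.exp (-(β^2*γ/3)) := step3.trans step5
      _ ≤ 1 - (β^2*γ/3)/2 := step6
      _ = 1 - β^2*γ/6 := by ring
  have final : 1 - q + q * (1 - β^2*γ/6) ≤ Real.exp (-(q * (β^2 * γ) / 6)) := by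
    have := Real.one_sub_le_exp_neg (q * (β^2*γ)/6)
    calc 1 - q + q * (1 - β^2*γ/6) = 1 - q * (β^2*γ)/6 := by ring
      _ ≤ Real.exp (-(q * (β^2 * γ) / 6)) := this
  calc 1 - q + q * (γ * Real.exp (t * (1 - (1+β)*γ)) + (1-γ) * Real.exp (t * (-((1+β)*γ))))
      ≤ 1 - q + q * (1 - β^2*γ/6) := by
        have := mul_le_mul_of_nonneg_left inner_le hq0.le; linarith
    _ ≤ _ := final

/-- per-sample mgf bound, lower tail, with `t = log (1-β)`, `c = (1-β)γ`. -/
lemma persample_lower {β γ q : ℝ} (hβ0 : 0 < β) (hβ1 : β < 1)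
    (hγ0 : 0 < γ) (hγ1 : γ ≤ 1) (hq0 : 0 < q) (hq1 : q ≤ 1) :
    1 - q + q * (γ * Real.exp (Real.log (1-β) * (1 - (1-β)*γ))
      + (1-γ) * Real.exp (Real.log (1-β) * (-((1-β)*γ))))
      ≤ Real.exp (-(q * (β^2 * γ) / 4)) := by
  set t : ℝ := Real.log (1-β) with ht
  have hb1 : (0:ℝ) < 1 - β := by linarith
  have het : Real.exp t = 1 - β := Real.exp_log hb1
  have e1 : Real.exp (t * (1 - (1-β)*γ)) = (1-β) * Real.exp (t * (-((1-β)*γ))) := by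
    rw [show t * (1 - (1-β)*γ) = t + t * (-((1-β)*γ)) by ring, Real.exp_add, het]
  have inner_eq : γ * Real.exp (t * (1 - (1-β)*γ)) + (1-γ) * Real.exp (t * (-((1-β)*γ)))
      = (1 - β*γ) * Real.exp (-((1-β)*γ*t)) := by
    rw [e1]; ring_nf
  have step2 : (1 - β*γ) ≤ Real.exp (-(β*γ)) := Real.one_sub_le_exp_neg _
  have hbγ : 0 < 1 - β*γ := by nlinarith
  have step3 : (1 - β*γ) * Real.exp (-((1-β)*γ*t)) ≤ Real.exp (-(β*γ) - (1-β)*γ*t) := by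
    have h := mul_le_mul_of_nonneg_right step2 (Real.exp_pos (-((1-β)*γ*t))).le
    rw [← Real.exp_add] at h
    calc (1 - β*γ) * Real.exp (-((1-β)*γ*t)) ≤ Real.exp (-(β*γ) + -((1-β)*γ*t)) := h
      _ = Real.exp (-(β*γ) - (1-β)*γ*t) := by ring_nf
  have step4 : -(β*γ) - (1-β)*γ*t ≤ -(β^2*γ/2) := by
    have h := aux_lower_log hβ0 hβ1
    have h2 : γ * (β^2/2 - β) ≤ γ * ((1-β)*t) := by
      apply mul_le_mul_of_nonneg_left _ hγ0.le
      rw [ht]; exact h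
    nlinarith
  have step6 : Real.exp (-(β^2*γ/2)) ≤ 1 - (β^2*γ/2)/2 := by
    apply aux_exp_neg_le
    · positivity
    · nlinarith
  have inner_le : γ * Real.exp (t * (1 - (1-β)*γ)) + (1-γ) * Real.exp (t * (-((1-β)*γ)))
      ≤ 1 - β^2*γ/4 := by
    rw [inner_eq]
    calc (1 - β*γ) * Real.exp (-((1-β)*γ*t)) ≤ Real.exp (-(β*γ) - (1-β)*γ*t) := step3
      _ ≤ Real.exp (-(β^2*γ/2)) := Real.exp_le_exp.2 step4
      _ ≤ 1 - (β^2*γ/2)/2 := step6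
      _ = 1 - β^2*γ/4 := by ring
  have final : 1 - q + q * (1 - β^2*γ/4) ≤ Real.exp (-(q * (β^2 * γ) / 4)) := by
    have := Real.one_sub_le_exp_neg (q * (β^2*γ)/4)
    calc 1 - q + q * (1 - β^2*γ/4) = 1 - q * (β^2*γ)/4 := by ring
      _ ≤ Real.exp (-(q * (β^2 * γ) / 4)) := this
  calc 1 - q + q * (γ * Real.exp (t * (1 - (1-β)*γ)) + (1-γ) * Real.exp (t * (-((1-β)*γ))))
      ≤ 1 - q + q * (1 - β^2*γ/4) := by
        have := mul_le_mul_of_nonneg_left inner_le hq0.le; linarith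
    _ ≤ _ := final

end auxiliary

section core
variable {Ω 𝓩 : Type*} [MeasurableSpace Ω] [MeasurableSpace 𝓩]

variable {Ω 𝓩 : Type*} [MeasurableSpace Ω] [MeasurableSpace 𝓩]

/-- the mgf of `∑ i, g (Z i)` for iid `Z i` with common law `ν`. -/
lemma mgf_sum_iid (μ : Measure Ω) [IsProbabilityMeasure μ]
    (ν : Measure 𝓩) [IsProbabilityMeasure ν]
    (n : ℕ) (Z : Fin n → Ω → 𝓩) (hmeas : ∀ i, Measurable (Z i))
    (hindep : iIndepFun Z μ) (hlaw : ∀ i, μ.map (Z i) = ν)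
    (g : 𝓩 → ℝ) (hg : Measurable g) (t : ℝ) :
    mgf (fun ω => ∑ i, g (Z i ω)) μ t = (∫ z, Real.exp (t * g z) ∂ν) ^ n := by
  have hind2 : iIndepFun (fun i => g ∘ Z i) μ :=
    hindep.comp (fun _ => g) (fun _ => hg)
  have hfun : (fun ω => ∑ i, g (Z i ω)) = ∑ i : Fin n, (g ∘ Z i) := by
    funext ω; simp [Finset.sum_apply]
  rw [hfun, hind2.mgf_sum (fun i => hg.comp (hmeas i)) Finset.univ]
  have heach : ∀ i : Fin n, mgf (g ∘ Z i) μ t = ∫ z, Real.exp (t * g z) ∂ν := by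
    intro i
    have h1 : ∫ z, Real.exp (t * g z) ∂ν = ∫ ω, Real.exp (t * g (Z i ω)) ∂μ := by
      rw [← hlaw i, integral_map (hmeas i).aemeasurable
        ((Measurable.exp (hg.const_mul t)).aestronglyMeasurable)]
    rw [mgf, h1]; rfl
  rw [Finset.prod_congr rfl (fun i _ => heach i), Finset.prod_const, Finset.card_univ,
    Fintype.card_fin]

lemma integral_exp_g (ν : Measure 𝓩) [IsProbabilityMeasure ν]
    (E F : Set 𝓩) (hE : MeasurableSet E) (hF : MeasurableSet F) (c t : ℝ) :
    ∫ z, Real.exp (t * (Set.indicator (E ∩ F) 1 z - c * Set.indicator E 1 z)) ∂ν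
      = 1 + (Real.exp (t*(1-c)) - 1) * (ν (E ∩ F)).toReal
          + (Real.exp (t*(-c)) - 1) * (ν (E \ F)).toReal := by
  have hpt : ∀ z, Real.exp (t * (Set.indicator (E ∩ F) 1 z - c * Set.indicator E 1 z))
      = 1 + Set.indicator (E ∩ F) (fun _ => Real.exp (t*(1-c)) - 1) z
          + Set.indicator (E \ F) (fun _ => Real.exp (t*(-c)) - 1) z := by
    intro z
    by_cases hzE : z ∈ E <;> by_cases hzF : z ∈ F <;>
      simp [Set.indicator_apply, Set.mem_inter_iff, Set.mem_diff, hzE, hzF] <;>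
      norm_num <;> ring_nf
  have hi1 : Integrable (Set.indicator (E ∩ F) (fun _ : 𝓩 => Real.exp (t*(1-c)) - 1)) ν :=
    (integrable_const _).indicator (hE.inter hF)
  have hi2 : Integrable (Set.indicator (E \ F) (fun _ : 𝓩 => Real.exp (t*(-c)) - 1)) ν :=
    (integrable_const _).indicator (hE.diff hF)
  calc ∫ z, Real.exp (t * (Set.indicator (E ∩ F) 1 z - c * Set.indicator E 1 z)) ∂ν
      = ∫ z, (1 + Set.indicator (E ∩ F) (fun _ => Real.exp (t*(1-c)) - 1) z
          + Set.indicator (E \ F) (fun _ => Real.exp (t*(-c)) - 1) z) ∂ν := by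
        exact integral_congr_ae (ae_of_all _ hpt)
    _ = 1 + (Real.exp (t*(1-c)) - 1) * (ν (E ∩ F)).toReal
          + (Real.exp (t*(-c)) - 1) * (ν (E \ F)).toReal := by
        have hf1 : Integrable (fun z => 1 + Set.indicator (E ∩ F)
            (fun _ : 𝓩 => Real.exp (t*(1-c)) - 1) z) ν := (integrable_const 1).add hi1
        rw [integral_add hf1 hi2, integral_add (integrable_const 1) hi1, integral_const,
          integral_indicator_const _ (hE.inter hF), integral_indicator_const _ (hE.diff hF)]
        simp [mul_comm, measureReal_def]

lemma sum_g_eq (n : ℕ) (Z : Fin n → Ω → 𝓩) (E F : Set 𝓩) (c : ℝ) (ω : Ω) :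
    (∑ i, (Set.indicator (E ∩ F) (1 : 𝓩 → ℝ) (Z i ω) - c * Set.indicator E 1 (Z i ω)))
      = ((Finset.univ.filter fun i => Z i ω ∈ E ∩ F).card : ℝ)
        - c * ((Finset.univ.filter fun i => Z i ω ∈ E).card : ℝ) := by
  rw [Finset.sum_sub_distrib, ← Finset.mul_sum]
  congr 1
  · rw [← Finset.sum_boole]
    exact Finset.sum_congr rfl fun i _ => by simp [Set.indicator_apply]
  · congr 1
    rw [← Finset.sum_boole]
    exact Finset.sum_congr rfl fun i _ => by simp [Set.indicator_apply]

lemma exp_sum_integrable (μ : Measure Ω) [IsProbabilityMeasure μ]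
    (n : ℕ) (Z : Fin n → Ω → 𝓩) (hmeas : ∀ i, Measurable (Z i))
    (E F : Set 𝓩) (hE : MeasurableSet E) (hF : MeasurableSet F) (c t : ℝ) (hc : 0 ≤ c) :
    Integrable (fun ω => Real.exp (t * (∑ i,
      (Set.indicator (E ∩ F) (1 : 𝓩 → ℝ) (Z i ω) - c * Set.indicator E 1 (Z i ω))))) μ := by
  set g : 𝓩 → ℝ := fun z => Set.indicator (E ∩ F) 1 z - c * Set.indicator E 1 z with hg
  have hgm : Measurable g :=
    (measurable_const.indicator (hE.inter hF)).sub
      ((measurable_const.indicator hE).const_mul c)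
  have hSm : Measurable (fun ω => ∑ i, g (Z i ω)) :=
    Finset.measurable_sum _ (fun i _ => hgm.comp (hmeas i))
  have hgb : ∀ z, |g z| ≤ 1 + c := by
    intro z
    have h1 : |Set.indicator (E ∩ F) (1 : 𝓩 → ℝ) z| ≤ 1 := by
      by_cases h : z ∈ E ∩ F <;> simp [Set.indicator_apply, h]
    have h2 : |Set.indicator E (1 : 𝓩 → ℝ) z| ≤ 1 := by
      by_cases h : z ∈ E <;> simp [Set.indicator_apply, h]
    calc |g z| ≤ |Set.indicator (E ∩ F) (1 : 𝓩 → ℝ) z| + |c * Set.indicator E 1 z| :=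
          abs_sub _ _
      _ ≤ 1 + c := by
          rw [abs_mul, abs_of_nonneg hc]
          have := mul_le_mul_of_nonneg_left h2 hc
          linarith
  refine (integrable_const (Real.exp (|t| * (n * (1 + c))))).mono'
    ((hSm.const_mul t).exp.aestronglyMeasurable) (ae_of_all _ fun ω => ?_)
  rw [Real.norm_eq_abs, Real.abs_exp, Real.exp_le_exp]
  have hsb : |∑ i, g (Z i ω)| ≤ n * (1 + c) := by
    calc |∑ i, g (Z i ω)| ≤ ∑ i, |g (Z i ω)| := Finset.abs_sum_le_sum_abs _ _
      _ ≤ ∑ _i : Fin n, (1 + c) := Finset.sum_le_sum fun i _ => hgb _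
      _ = n * (1 + c) := by
          rw [Finset.sum_const, Finset.card_univ, Fintype.card_fin, nsmul_eq_mul]
  calc t * (∑ i, g (Z i ω)) ≤ |t * (∑ i, g (Z i ω))| := le_abs_self _
    _ = |t| * |∑ i, g (Z i ω)| := abs_mul _ _
    _ ≤ |t| * (n * (1 + c)) := by
        exact mul_le_mul_of_nonneg_left hsb (abs_nonneg t)


variable {Ω 𝓩 : Type*} [MeasurableSpace Ω] [MeasurableSpace 𝓩]

lemma chernoff_upper_core (μ : Measure Ω) [IsProbabilityMeasure μ]
    (ν : Measure 𝓩) [IsProbabilityMeasure ν]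
    (n : ℕ) (Z : Fin n → Ω → 𝓩) (hmeas : ∀ i, Measurable (Z i))
    (hindep : iIndepFun Z μ) (hlaw : ∀ i, μ.map (Z i) = ν)
    (E F : Set 𝓩) (hE : MeasurableSet E) (hF : MeasurableSet F)
    (c t : ℝ) (hc : 0 ≤ c) (ht : 0 ≤ t) :
    (μ {ω | (0:ℝ) ≤ ((Finset.univ.filter fun i => Z i ω ∈ E ∩ F).card : ℝ)
        - c * ((Finset.univ.filter fun i => Z i ω ∈ E).card : ℝ)}).toReal
      ≤ (1 + (Real.exp (t*(1-c)) - 1) * (ν (E ∩ F)).toReal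
          + (Real.exp (t*(-c)) - 1) * (ν (E \ F)).toReal) ^ n := by
  have hset : {ω | (0:ℝ) ≤ ((Finset.univ.filter fun i => Z i ω ∈ E ∩ F).card : ℝ)
        - c * ((Finset.univ.filter fun i => Z i ω ∈ E).card : ℝ)}
      = {ω | (0:ℝ) ≤ ∑ i, (Set.indicator (E ∩ F) (1 : 𝓩 → ℝ) (Z i ω)
        - c * Set.indicator E 1 (Z i ω))} := by
    ext ω; simp only [Set.mem_setOf_eq, sum_g_eq n Z E F c ω]
  rw [hset]
  have hint := exp_sum_integrable μ n Z hmeas E F hE hF c t hc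
  have hchern := measure_ge_le_exp_mul_mgf
    (X := fun ω => ∑ i, (Set.indicator (E ∩ F) (1 : 𝓩 → ℝ) (Z i ω)
      - c * Set.indicator E 1 (Z i ω))) (μ := μ) 0 ht hint
  have hgm : Measurable (fun z => Set.indicator (E ∩ F) (1 : 𝓩 → ℝ) z
      - c * Set.indicator E 1 z) :=
    (measurable_const.indicator (hE.inter hF)).sub
      ((measurable_const.indicator hE).const_mul c)
  have hmgf := mgf_sum_iid μ ν n Z hmeas hindep hlaw
    (fun z => Set.indicator (E ∩ F) (1 : 𝓩 → ℝ) z - c * Set.indicator E 1 z) hgm t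
  rw [integral_exp_g ν E F hE hF c t] at hmgf
  calc (μ _).toReal ≤ Real.exp (-t * 0) * mgf _ μ t := hchern
    _ = mgf (fun ω => ∑ i, (Set.indicator (E ∩ F) (1 : 𝓩 → ℝ) (Z i ω)
        - c * Set.indicator E 1 (Z i ω))) μ t := by simp
    _ = _ := hmgf

lemma chernoff_lower_core (μ : Measure Ω) [IsProbabilityMeasure μ]
    (ν : Measure 𝓩) [IsProbabilityMeasure ν]
    (n : ℕ) (Z : Fin n → Ω → 𝓩) (hmeas : ∀ i, Measurable (Z i))
    (hindep : iIndepFun Z μ) (hlaw : ∀ i, μ.map (Z i) = ν)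
    (E F : Set 𝓩) (hE : MeasurableSet E) (hF : MeasurableSet F)
    (c t : ℝ) (hc : 0 ≤ c) (ht : t ≤ 0) :
    (μ {ω | ((Finset.univ.filter fun i => Z i ω ∈ E ∩ F).card : ℝ)
        - c * ((Finset.univ.filter fun i => Z i ω ∈ E).card : ℝ) ≤ 0}).toReal
      ≤ (1 + (Real.exp (t*(1-c)) - 1) * (ν (E ∩ F)).toReal
          + (Real.exp (t*(-c)) - 1) * (ν (E \ F)).toReal) ^ n := by
  have hset : {ω | ((Finset.univ.filter fun i => Z i ω ∈ E ∩ F).card : ℝ)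
        - c * ((Finset.univ.filter fun i => Z i ω ∈ E).card : ℝ) ≤ 0}
      = {ω | (∑ i, (Set.indicator (E ∩ F) (1 : 𝓩 → ℝ) (Z i ω)
        - c * Set.indicator E 1 (Z i ω))) ≤ 0} := by
    ext ω; simp only [Set.mem_setOf_eq, sum_g_eq n Z E F c ω]
  rw [hset]
  have hint := exp_sum_integrable μ n Z hmeas E F hE hF c t hc
  have hchern := measure_le_le_exp_mul_mgf
    (X := fun ω => ∑ i, (Set.indicator (E ∩ F) (1 : 𝓩 → ℝ) (Z i ω)
      - c * Set.indicator E 1 (Z i ω))) (μ := μ) 0 ht hint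
  have hgm : Measurable (fun z => Set.indicator (E ∩ F) (1 : 𝓩 → ℝ) z
      - c * Set.indicator E 1 z) :=
    (measurable_const.indicator (hE.inter hF)).sub
      ((measurable_const.indicator hE).const_mul c)
  have hmgf := mgf_sum_iid μ ν n Z hmeas hindep hlaw
    (fun z => Set.indicator (E ∩ F) (1 : 𝓩 → ℝ) z - c * Set.indicator E 1 z) hgm t
  rw [integral_exp_g ν E F hE hF c t] at hmgf
  calc (μ _).toReal ≤ Real.exp (-t * 0) * mgf _ μ t := hchern
    _ = mgf (fun ω => ∑ i, (Set.indicator (E ∩ F) (1 : 𝓩 → ℝ) (Z i ω)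
        - c * Set.indicator E 1 (Z i ω))) μ t := by simp
    _ = _ := hmgf


end core

/-- multiplicative concentration bounds for an empirical
conditional-probability estimate.  Setup as in Statement 13:  `Z₁,…,Zₙ` i.i.d. with
law `ν`, `q = ν(E) > 0`, `γ = ν(F ∣ E)`, and `γ̂` the empirical estimate with the
convention `0/0 = 0`.  Then for `β ∈ (0,1)`:
`ℙ(γ̂ ≥ (1+β)γ) ≤ exp(−qn/8) + exp(−β²qγn/6)` and
`ℙ(γ̂ ≤ (1−β)γ) ≤ exp(−qn/8) + exp(−β²qγn/4)`. -/
theorem stmt16 {Ω 𝓩 : Type*} [MeasurableSpace Ω] [MeasurableSpace 𝓩]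
    (μ : Measure Ω) [IsProbabilityMeasure μ]
    (ν : Measure 𝓩) [IsProbabilityMeasure ν]
    (n : ℕ) (Z : Fin n → Ω → 𝓩)
    (hmeas : ∀ i, Measurable (Z i))
    (hindep : iIndepFun Z μ)
    (hlaw : ∀ i, μ.map (Z i) = ν)
    (E F : Set 𝓩) (hE : MeasurableSet E) (hF : MeasurableSet F)
    (q γ : ℝ) (hq : q = (ν E).toReal) (hq0 : 0 < q)
    (hγ : γ = (ν (E ∩ F)).toReal / q)
    (γhat : Ω → ℝ)
    (hγhat : ∀ ω, γhat ω =
      ((Finset.univ.filter fun i => Z i ω ∈ E ∩ F).card : ℝ) /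
      ((Finset.univ.filter fun i => Z i ω ∈ E).card : ℝ))
    (β : ℝ) (hβ0 : 0 < β) (hβ1 : β < 1) :
    μ {ω | (1 + β) * γ ≤ γhat ω} ≤
      ENNReal.ofReal (Real.exp (-(q * n)/8) + Real.exp (-(β^2 * q * γ * n)/6)) ∧
    μ {ω | γhat ω ≤ (1 - β) * γ} ≤
      ENNReal.ofReal (Real.exp (-(q * n)/8) + Real.exp (-(β^2 * q * γ * n)/4)) := by
  have hγ0' : 0 ≤ γ := by
    rw [hγ]; exact div_nonneg ENNReal.toReal_nonneg hq0.le
  have hq1 : q ≤ 1 := by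
    rw [hq]
    calc (ν E).toReal ≤ (ν Set.univ).toReal :=
          ENNReal.toReal_mono (measure_ne_top ν _) (measure_mono (Set.subset_univ E))
      _ = 1 := by simp
  rcases eq_or_lt_of_le hγ0' with hγ0 | hγ0
  · -- γ = 0 : trivial since RHS ≥ 1
    have hR : ∀ r : ℝ, 1 ≤ Real.exp (-(q * n)/8) + Real.exp (-(β^2 * q * γ * n)/r) := by
      intro r
      have h1 : β^2 * q * γ * n = 0 := by rw [← hγ0]; ring
      rw [h1]
      norm_num
      exact (Real.exp_pos _).le
    constructor <;>
    · refine le_trans prob_le_one ?_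
      rw [← ENNReal.ofReal_one]
      exact ENNReal.ofReal_le_ofReal (hR _)
  · -- γ > 0
    have hγ1 : γ ≤ 1 := by
      rw [hγ, div_le_one hq0, hq]
      exact ENNReal.toReal_mono (measure_ne_top ν E) (measure_mono Set.inter_subset_left)
    have hp1 : (ν (E ∩ F)).toReal = q * γ := by
      rw [hγ]; field_simp
    have hp2 : (ν (E \ F)).toReal = q - q * γ := by
      have h := measure_inter_add_diff E hF (μ := ν)
      have h2 : (ν (E ∩ F)).toReal + (ν (E \ F)).toReal = (ν E).toReal := by
        rw [← ENNReal.toReal_add (measure_ne_top _ _) (measure_ne_top _ _), h]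
      rw [← hq] at h2
      linarith [hp1]
    constructor
    · -- upper tail
      have hc : (0:ℝ) ≤ (1+β)*γ := by positivity
      have ht : (0:ℝ) ≤ Real.log (1+β) := Real.log_nonneg (by linarith)
      have hcore := chernoff_upper_core μ ν n Z hmeas hindep hlaw E F hE hF
        ((1+β)*γ) (Real.log (1+β)) hc ht
      rw [hp1, hp2] at hcore
      -- bound the base
      have hbase : 1 + (Real.exp (Real.log (1+β)*(1-(1+β)*γ)) - 1) * (q*γ)
          + (Real.exp (Real.log (1+β)*(-((1+β)*γ))) - 1) * (q - q*γ)
          ≤ Real.exp (-(q * (β^2 * γ) / 6)) := by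
        have h := persample_upper hβ0 hβ1 hγ0 hγ1 hq0 hq1
        calc 1 + (Real.exp (Real.log (1+β)*(1-(1+β)*γ)) - 1) * (q*γ)
            + (Real.exp (Real.log (1+β)*(-((1+β)*γ))) - 1) * (q - q*γ)
            = 1 - q + q * (γ * Real.exp (Real.log (1+β) * (1 - (1+β)*γ))
              + (1-γ) * Real.exp (Real.log (1+β) * (-((1+β)*γ)))) := by ring
          _ ≤ _ := h
      have hbase0 : (0:ℝ) ≤ 1 + (Real.exp (Real.log (1+β)*(1-(1+β)*γ)) - 1) * (q*γ)
          + (Real.exp (Real.log (1+β)*(-((1+β)*γ))) - 1) * (q - q*γ) := by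
        have e1 : 1 + (Real.exp (Real.log (1+β)*(1-(1+β)*γ)) - 1) * (q*γ)
            + (Real.exp (Real.log (1+β)*(-((1+β)*γ))) - 1) * (q - q*γ)
            = 1 - q + q * (γ * Real.exp (Real.log (1+β) * (1 - (1+β)*γ))
              + (1-γ) * Real.exp (Real.log (1+β) * (-((1+β)*γ)))) := by ring
        rw [e1]
        have h1 : 0 ≤ γ * Real.exp (Real.log (1+β) * (1 - (1+β)*γ)) :=
          mul_nonneg hγ0.le (Real.exp_pos _).le
        have h2 : 0 ≤ (1-γ) * Real.exp (Real.log (1+β) * (-((1+β)*γ))) :=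
          mul_nonneg (by linarith) (Real.exp_pos _).le
        nlinarith
      have hpow : (1 + (Real.exp (Real.log (1+β)*(1-(1+β)*γ)) - 1) * (q*γ)
          + (Real.exp (Real.log (1+β)*(-((1+β)*γ))) - 1) * (q - q*γ)) ^ n
          ≤ Real.exp (-(β^2 * q * γ * n)/6) := by
        calc (1 + (Real.exp (Real.log (1+β)*(1-(1+β)*γ)) - 1) * (q*γ)
            + (Real.exp (Real.log (1+β)*(-((1+β)*γ))) - 1) * (q - q*γ)) ^ n
            ≤ (Real.exp (-(q * (β^2 * γ) / 6))) ^ n := pow_le_pow_left₀ hbase0 hbase n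
          _ = Real.exp (-(β^2 * q * γ * n)/6) := by
              rw [← Real.exp_nat_mul]; congr 1; push_cast; ring
      -- event inclusion
      have hsub : {ω | (1 + β) * γ ≤ γhat ω} ⊆
          {ω | (0:ℝ) ≤ ((Finset.univ.filter fun i => Z i ω ∈ E ∩ F).card : ℝ)
            - (1+β)*γ * ((Finset.univ.filter fun i => Z i ω ∈ E).card : ℝ)} := by
        intro ω hω
        simp only [Set.mem_setOf_eq] at hω ⊢
        rw [hγhat ω] at hω
        by_cases hB : (Finset.univ.filter fun i => Z i ω ∈ E).card = 0
        · exfalso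
          rw [hB] at hω
          norm_num at hω
          nlinarith
        · have hBpos : (0:ℝ) < ((Finset.univ.filter fun i => Z i ω ∈ E).card : ℝ) :=
            Nat.cast_pos.2 (Nat.pos_of_ne_zero hB)
          have := (le_div_iff₀ hBpos).1 hω
          linarith
      calc μ {ω | (1 + β) * γ ≤ γhat ω}
          ≤ μ {ω | (0:ℝ) ≤ ((Finset.univ.filter fun i => Z i ω ∈ E ∩ F).card : ℝ)
            - (1+β)*γ * ((Finset.univ.filter fun i => Z i ω ∈ E).card : ℝ)} :=
            measure_mono hsub
        _ = ENNReal.ofReal ((μ {ω | (0:ℝ) ≤ ((Finset.univ.filter fun i => Z i ω ∈ E ∩ F).card : ℝ)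
            - (1+β)*γ * ((Finset.univ.filter fun i => Z i ω ∈ E).card : ℝ)}).toReal) :=
            (ENNReal.ofReal_toReal (measure_ne_top μ _)).symm
        _ ≤ ENNReal.ofReal (Real.exp (-(q * n)/8) + Real.exp (-(β^2 * q * γ * n)/6)) := by
            apply ENNReal.ofReal_le_ofReal
            have h3 := le_trans hcore hpow
            nlinarith [Real.exp_pos (-(q * (n:ℝ))/8)]
    · -- lower tail
      have hc : (0:ℝ) ≤ (1-β)*γ := by nlinarith
      have ht : Real.log (1-β) ≤ 0 := Real.log_nonpos (by linarith) (by linarith)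
      have hcore := chernoff_lower_core μ ν n Z hmeas hindep hlaw E F hE hF
        ((1-β)*γ) (Real.log (1-β)) hc ht
      rw [hp1, hp2] at hcore
      have hbase : 1 + (Real.exp (Real.log (1-β)*(1-(1-β)*γ)) - 1) * (q*γ)
          + (Real.exp (Real.log (1-β)*(-((1-β)*γ))) - 1) * (q - q*γ)
          ≤ Real.exp (-(q * (β^2 * γ) / 4)) := by
        have h := persample_lower hβ0 hβ1 hγ0 hγ1 hq0 hq1
        calc 1 + (Real.exp (Real.log (1-β)*(1-(1-β)*γ)) - 1) * (q*γ)
            + (Real.exp (Real.log (1-β)*(-((1-β)*γ))) - 1) * (q - q*γ)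
            = 1 - q + q * (γ * Real.exp (Real.log (1-β) * (1 - (1-β)*γ))
              + (1-γ) * Real.exp (Real.log (1-β) * (-((1-β)*γ)))) := by ring
          _ ≤ _ := h
      have hbase0 : (0:ℝ) ≤ 1 + (Real.exp (Real.log (1-β)*(1-(1-β)*γ)) - 1) * (q*γ)
          + (Real.exp (Real.log (1-β)*(-((1-β)*γ))) - 1) * (q - q*γ) := by
        have e1 : 1 + (Real.exp (Real.log (1-β)*(1-(1-β)*γ)) - 1) * (q*γ)
            + (Real.exp (Real.log (1-β)*(-((1-β)*γ))) - 1) * (q - q*γ)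
            = 1 - q + q * (γ * Real.exp (Real.log (1-β) * (1 - (1-β)*γ))
              + (1-γ) * Real.exp (Real.log (1-β) * (-((1-β)*γ)))) := by ring
        rw [e1]
        have h1 : 0 ≤ γ * Real.exp (Real.log (1-β) * (1 - (1-β)*γ)) :=
          mul_nonneg hγ0.le (Real.exp_pos _).le
        have h2 : 0 ≤ (1-γ) * Real.exp (Real.log (1-β) * (-((1-β)*γ))) :=
          mul_nonneg (by linarith) (Real.exp_pos _).le
        nlinarith
      have hpow : (1 + (Real.exp (Real.log (1-β)*(1-(1-β)*γ)) - 1) * (q*γ)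
          + (Real.exp (Real.log (1-β)*(-((1-β)*γ))) - 1) * (q - q*γ)) ^ n
          ≤ Real.exp (-(β^2 * q * γ * n)/4) := by
        calc (1 + (Real.exp (Real.log (1-β)*(1-(1-β)*γ)) - 1) * (q*γ)
            + (Real.exp (Real.log (1-β)*(-((1-β)*γ))) - 1) * (q - q*γ)) ^ n
            ≤ (Real.exp (-(q * (β^2 * γ) / 4))) ^ n := pow_le_pow_left₀ hbase0 hbase n
          _ = Real.exp (-(β^2 * q * γ * n)/4) := by
              rw [← Real.exp_nat_mul]; congr 1; push_cast; ring
      have hsub : {ω | γhat ω ≤ (1 - β) * γ} ⊆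
          {ω | ((Finset.univ.filter fun i => Z i ω ∈ E ∩ F).card : ℝ)
            - (1-β)*γ * ((Finset.univ.filter fun i => Z i ω ∈ E).card : ℝ) ≤ 0} := by
        intro ω hω
        simp only [Set.mem_setOf_eq] at hω ⊢
        rw [hγhat ω] at hω
        by_cases hB : (Finset.univ.filter fun i => Z i ω ∈ E).card = 0
        · have hA : (Finset.univ.filter fun i => Z i ω ∈ E ∩ F).card = 0 := by
            have hsub2 : (Finset.univ.filter fun i => Z i ω ∈ E ∩ F)
                ⊆ (Finset.univ.filter fun i => Z i ω ∈ E) := by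
              intro i hi; simp only [Finset.mem_filter] at hi ⊢; exact ⟨hi.1, hi.2.1⟩
            have := Finset.card_le_card hsub2
            omega
          rw [hA, hB]
          norm_num
        · have hBpos : (0:ℝ) < ((Finset.univ.filter fun i => Z i ω ∈ E).card : ℝ) :=
            Nat.cast_pos.2 (Nat.pos_of_ne_zero hB)
          have := (div_le_iff₀ hBpos).1 hω
          nlinarith
      calc μ {ω | γhat ω ≤ (1 - β) * γ}
          ≤ μ {ω | ((Finset.univ.filter fun i => Z i ω ∈ E ∩ F).card : ℝ)
            - (1-β)*γ * ((Finset.univ.filter fun i => Z i ω ∈ E).card : ℝ) ≤ 0} :=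
            measure_mono hsub
        _ = ENNReal.ofReal ((μ {ω | ((Finset.univ.filter fun i => Z i ω ∈ E ∩ F).card : ℝ)
            - (1-β)*γ * ((Finset.univ.filter fun i => Z i ω ∈ E).card : ℝ) ≤ 0}).toReal) :=
            (ENNReal.ofReal_toReal (measure_ne_top μ _)).symm
        _ ≤ ENNReal.ofReal (Real.exp (-(q * n)/8) + Real.exp (-(β^2 * q * γ * n)/4)) := by
            apply ENNReal.ofReal_le_ofReal
            have h3 := le_trans hcore hpow
            nlinarith [Real.exp_pos (-(q * (n:ℝ))/8)]
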